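/- Let U ∈ ℝ^{d×n} be a frame and z ∈ ℝ^n a positive vector such that ‖lev^U(z) − (d/n)·1_n‖_2 ≤ d/(2n) (in particular ε := d/(2n)-approximate (I_d, (d/n)1_n)-position). Define the inner product ⟨u,v⟩_Q := u^T (U Z U^T)^{-1} v with norm ‖u‖_Q² = ⟨u,u⟩_Q. Then for every nonzero w ∈ ℝ^d, the set T := { j ∈ [n] : ⟨w, u_j⟩_Q² ≥ (1/(4d))·‖w‖_Q²·‖u_j‖_Q² } satisfies |T| ≥ n/(5d). -/

import Mathlib

open Matrix BigOperators

/-- Leverage scores: `lev^U_j(z) = z_j · u_jᵀ (U Z Uᵀ)⁻¹ u_j`. -/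
noncomputable def lev {d n : ℕ} (U : Matrix (Fin d) (Fin n) ℝ) (z : Fin n → ℝ)
    (j : Fin n) : ℝ :=
  z j * ((fun i => U i j) ⬝ᵥ ((U * Matrix.diagonal z * Uᵀ)⁻¹ *ᵥ fun i => U i j))

/-- The inner product `⟨u,v⟩_Q = uᵀ (U Z Uᵀ)⁻¹ v` induced by the scaling `z`. -/
noncomputable def Qip {d n : ℕ} (U : Matrix (Fin d) (Fin n) ℝ) (z : Fin n → ℝ)
    (u v : Fin d → ℝ) : ℝ :=
  u ⬝ᵥ ((U * Matrix.diagonal z * Uᵀ)⁻¹ *ᵥ v)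

variable {d n : ℕ}

lemma hMent (U : Matrix (Fin d) (Fin n) ℝ) (z : Fin n → ℝ) (i k : Fin d) :
    (U * Matrix.diagonal z * Uᵀ) i k = ∑ j, U i j * z j * U k j := by
  rw [Matrix.mul_apply]
  simp [Matrix.mul_diagonal]

lemma dotA (U : Matrix (Fin d) (Fin n) ℝ) (z : Fin n → ℝ) (x y : Fin d → ℝ) :
    x ⬝ᵥ ((U * Matrix.diagonal z * Uᵀ) *ᵥ y)
      = ∑ j, z j * (x ⬝ᵥ fun i => U i j) * (y ⬝ᵥ fun i => U i j) := by
  simp only [Matrix.mulVec, dotProduct, hMent, Finset.sum_mul, Finset.mul_sum]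
  rw [Finset.sum_comm]
  rw [show (∑ x_1 : Fin n, ∑ x_2 : Fin d, ∑ i : Fin d, z x_1 * (x i * U i x_1) * (y x_2 * U x_2 x_1))
      = ∑ x_2 : Fin d, ∑ x_1 : Fin n, ∑ i : Fin d, z x_1 * (x i * U i x_1) * (y x_2 * U x_2 x_1) from Finset.sum_comm]
  refine Finset.sum_congr rfl fun k _ => ?_
  rw [Finset.sum_comm]
  refine Finset.sum_congr rfl fun j _ => Finset.sum_congr rfl fun i _ => by ring

lemma vecMulU_ne (U : Matrix (Fin d) (Fin n) ℝ) (hU : U.rank = d)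
    {x : Fin d → ℝ} (hx : x ≠ 0) : x ᵥ* U ≠ 0 := by
  have hrk : Uᵀ.rank = d := by rw [Matrix.rank_transpose]; exact hU
  have hker : LinearMap.ker Uᵀ.mulVecLin = ⊥ := by
    have h1 := LinearMap.finrank_range_add_finrank_ker Uᵀ.mulVecLin
    rw [show Module.finrank ℝ (LinearMap.range Uᵀ.mulVecLin) = d from hrk] at h1
    simp only [Module.finrank_pi, Fintype.card_fin] at h1
    have : Module.finrank ℝ (LinearMap.ker Uᵀ.mulVecLin) = 0 := by omega
    exact Submodule.finrank_eq_zero.mp this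
  intro h
  apply hx
  have : Uᵀ *ᵥ x = 0 := by rw [Matrix.mulVec_transpose]; exact h
  have : x ∈ LinearMap.ker Uᵀ.mulVecLin := this
  rw [hker] at this; simpa using this

lemma Mpd (U : Matrix (Fin d) (Fin n) ℝ) (hU : U.rank = d) (z : Fin n → ℝ)
    (hz : ∀ j, 0 < z j) : (U * Matrix.diagonal z * Uᵀ).PosDef := by
  refine Matrix.PosDef.of_dotProduct_mulVec_pos ?_ ?_
  · show (U * Matrix.diagonal z * Uᵀ)ᴴ = _
    ext i k
    simp only [Matrix.conjTranspose_apply, star_trivial, hMent]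
    exact Finset.sum_congr rfl fun j _ => by ring
  · intro x hx
    rw [star_trivial, dotA]
    have hne : x ᵥ* U ≠ 0 := vecMulU_ne U hU hx
    obtain ⟨j0, hj0⟩ : ∃ j, (x ᵥ* U) j ≠ 0 := by
      by_contra h
      push_neg at h
      exact hne (funext h)
    have hxu : ∀ j : Fin n, (x ⬝ᵥ fun i => U i j) = (x ᵥ* U) j := by
      intro j; simp [Matrix.vecMul, dotProduct]
    refine Finset.sum_pos' (fun j _ => ?_) ⟨j0, Finset.mem_univ _, ?_⟩
    · rw [hxu]; nlinarith [(hz j).le, sq_nonneg ((x ᵥ* U) j)]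
    · rw [hxu]; nlinarith [hz j0, (by positivity : 0 < ((x ᵥ* U) j0)^2)]

lemma Qsymm (U : Matrix (Fin d) (Fin n) ℝ) (hU : U.rank = d) (z : Fin n → ℝ)
    (hz : ∀ j, 0 < z j) (x y : Fin d → ℝ) :
    Qip U z x y = Qip U z y x := by
  have hQh : ((U * Matrix.diagonal z * Uᵀ)⁻¹)ᵀ = (U * Matrix.diagonal z * Uᵀ)⁻¹ := by
    have := ((Mpd U hU z hz).inv).isHermitian
    simpa [Matrix.IsHermitian, Matrix.conjTranspose_eq_transpose_of_trivial] using this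
  unfold Qip
  rw [Matrix.dotProduct_mulVec, ← Matrix.mulVec_transpose, hQh, dotProduct_comm]

lemma Qip_nonneg (U : Matrix (Fin d) (Fin n) ℝ) (hU : U.rank = d) (z : Fin n → ℝ)
    (hz : ∀ j, 0 < z j) (x : Fin d → ℝ) : 0 ≤ Qip U z x x := by
  rcases eq_or_ne x 0 with h | h
  · simp [Qip, h]
  · have := ((Mpd U hU z hz).inv).dotProduct_mulVec_pos h
    rw [star_trivial] at this
    exact this.le

lemma Qip_pos (U : Matrix (Fin d) (Fin n) ℝ) (hU : U.rank = d) (z : Fin n → ℝ)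
    (hz : ∀ j, 0 < z j) {x : Fin d → ℝ} (hx : x ≠ 0) : 0 < Qip U z x x := by
  have := ((Mpd U hU z hz).inv).dotProduct_mulVec_pos hx
  rwa [star_trivial] at this

lemma MQ_one (U : Matrix (Fin d) (Fin n) ℝ) (hU : U.rank = d) (z : Fin n → ℝ)
    (hz : ∀ j, 0 < z j) :
    (U * Matrix.diagonal z * Uᵀ) * (U * Matrix.diagonal z * Uᵀ)⁻¹ = 1 :=
  Matrix.mul_nonsing_inv _ (Matrix.isUnit_iff_isUnit_det _ |>.mp (Mpd U hU z hz).isUnit)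

/-- Parseval-type identity. -/
lemma sum_z_sq (U : Matrix (Fin d) (Fin n) ℝ) (hU : U.rank = d) (z : Fin n → ℝ)
    (hz : ∀ j, 0 < z j) (w : Fin d → ℝ) :
    ∑ j, z j * (Qip U z w (fun i => U i j))^2 = Qip U z w w := by
  set Q := (U * Matrix.diagonal z * Uᵀ)⁻¹ with hQ
  have key := dotA U z (Q *ᵥ w) (Q *ᵥ w)
  have h1 : (U * Matrix.diagonal z * Uᵀ) *ᵥ (Q *ᵥ w) = w := by
    rw [Matrix.mulVec_mulVec, MQ_one U hU z hz, Matrix.one_mulVec]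
  rw [h1] at key
  have h2 : ((Q *ᵥ w) ⬝ᵥ w) = Qip U z w w := by
    rw [dotProduct_comm]; rfl
  rw [h2] at key
  rw [key]
  refine Finset.sum_congr rfl fun j _ => ?_
  have h3 : ((Q *ᵥ w) ⬝ᵥ fun i => U i j) = Qip U z w (fun i => U i j) := by
    rw [dotProduct_comm, ← Qsymm U hU z hz]
    unfold Qip
    rw [dotProduct_comm]
  rw [h3]; ring

lemma trace_lev (U : Matrix (Fin d) (Fin n) ℝ) (hU : U.rank = d) (z : Fin n → ℝ)
    (hz : ∀ j, 0 < z j) : ∑ j, lev U z j = d := by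
  set Q := (U * Matrix.diagonal z * Uᵀ)⁻¹ with hQ
  have key : ∑ j, lev U z j = Matrix.trace ((U * Matrix.diagonal z * Uᵀ) * Q) := by
    rw [Matrix.trace]
    simp only [Matrix.diag, Matrix.mul_apply, hMent, lev, Matrix.mulVec, dotProduct,
      Finset.sum_mul, Finset.mul_sum]
    simp only [Matrix.diagonal_apply, Matrix.transpose_apply, ite_mul, mul_ite, mul_zero,
      zero_mul, Finset.sum_ite_eq', Finset.mem_univ, if_true, ← hQ]
    rw [show (∑ x : Fin d, ∑ x_1 : Fin d, ∑ x_2 : Fin n, U x x_2 * z x_2 * U x_1 x_2 * Q x_1 x)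
        = ∑ x_2 : Fin n, ∑ x : Fin d, ∑ x_1 : Fin d, U x x_2 * z x_2 * U x_1 x_2 * Q x_1 x by
      exact (Finset.sum_congr rfl fun _ _ => Finset.sum_comm).trans Finset.sum_comm]
    refine Finset.sum_congr rfl fun j _ => ?_
    rw [Finset.sum_comm]
    refine Finset.sum_congr rfl fun i _ => Finset.sum_congr rfl fun k _ => by ring
  rw [key, MQ_one U hU z hz, Matrix.trace_one]
  simp

lemma QCS (U : Matrix (Fin d) (Fin n) ℝ) (hU : U.rank = d) (z : Fin n → ℝ)
    (hz : ∀ j, 0 < z j) (w u : Fin d → ℝ) :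
    (Qip U z w u)^2 ≤ Qip U z w w * Qip U z u u := by
  rcases eq_or_ne w 0 with h|h
  · simp [Qip, h]
  · have hW := Qip_pos U hU z hz h
    set c := Qip U z w u / Qip U z w w with hc
    have hsym := Qsymm U hU z hz w u
    have hexp : Qip U z (u - c • w) (u - c • w)
        = Qip U z u u - 2*c*(Qip U z w u) + c^2 * Qip U z w w := by
      unfold Qip at hsym ⊢
      simp only [Matrix.mulVec_sub, Matrix.mulVec_smul, sub_dotProduct,
        dotProduct_sub, smul_dotProduct, dotProduct_smul, smul_eq_mul]
      rw [← hsym]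
      ring
    have h0 := Qip_nonneg U hU z hz (u - c • w)
    rw [hexp] at h0
    have hcw : c * Qip U z w w = Qip U z w u := by
      rw [hc]; field_simp
    nlinarith [mul_nonneg hW.le h0, hW]

/-- Margin lemma for approximately radially isotropic frames: if
`‖lev^U(z) − (d/n)1_n‖₂ ≤ d/(2n)`, then for every nonzero `w ∈ ℝ^d`, at least an
`1/(5d)` fraction of the columns `u_j` satisfy
`⟨w,u_j⟩_Q² ≥ (1/(4d))‖w‖_Q²‖u_j‖_Q²`. -/
theorem forster_margin {d n : ℕ} (U : Matrix (Fin d) (Fin n) ℝ) (hU : U.rank = d)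
    (z : Fin n → ℝ) (hz : ∀ j, 0 < z j)
    (hiso : Real.sqrt (∑ j, (lev U z j - (d : ℝ) / n) ^ 2) ≤ (d : ℝ) / (2 * n)) :
    ∀ w : Fin d → ℝ, w ≠ 0 →
      (n : ℝ) / (5 * d) ≤
        ({j : Fin n | (1 / (4 * (d : ℝ))) * Qip U z w w *
            Qip U z (fun i => U i j) (fun i => U i j)
          ≤ (Qip U z w (fun i => U i j)) ^ 2} : Set (Fin n)).ncard := by
  classical
  intro w hw
  rcases Nat.eq_zero_or_pos d with hd0 | hd
  · exfalso; subst hd0; exact hw (Subsingleton.elim w 0)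
  have hdn : d ≤ n := by
    have := Matrix.rank_le_card_width U
    rw [hU] at this; simpa using this
  have hn : 0 < n := lt_of_lt_of_le hd hdn
  have hdR : (0:ℝ) < d := by exact_mod_cast hd
  have hnR : (0:ℝ) < n := by exact_mod_cast hn
  set W := Qip U z w w with hWdef
  have hW : 0 < W := Qip_pos U hU z hz hw
  set a : Fin n → ℝ := fun j => Qip U z w (fun i => U i j) with ha
  set q : Fin n → ℝ := fun j => Qip U z (fun i => U i j) (fun i => U i j) with hq
  have hlev : ∀ j, lev U z j = z j * q j := fun j => rfl
  have hlev_nonneg : ∀ j, 0 ≤ lev U z j := fun j => by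
    rw [hlev]; exact mul_nonneg (hz j).le (Qip_nonneg U hU z hz _)
  have htr : ∑ j, lev U z j = d := trace_lev U hU z hz
  -- coordinatewise leverage bound
  have hcoord : ∀ j, lev U z j ≤ 3*d/(2*n) := by
    intro j
    have h0 : (0:ℝ) ≤ ∑ j, (lev U z j - (d:ℝ)/n)^2 :=
      Finset.sum_nonneg fun j _ => sq_nonneg _
    have h1 : (lev U z j - (d:ℝ)/n)^2 ≤ ((d:ℝ)/(2*n))^2 := by
      calc (lev U z j - (d:ℝ)/n)^2
          ≤ ∑ j, (lev U z j - (d:ℝ)/n)^2 :=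
            Finset.single_le_sum (f := fun j => (lev U z j - (d:ℝ)/n)^2) (fun j _ => sq_nonneg _) (Finset.mem_univ j)
        _ = (Real.sqrt (∑ j, (lev U z j - (d:ℝ)/n)^2))^2 := (Real.sq_sqrt h0).symm
        _ ≤ ((d:ℝ)/(2*n))^2 := by
            exact pow_le_pow_left₀ (Real.sqrt_nonneg _) hiso 2
    have h2 : lev U z j - (d:ℝ)/n ≤ (d:ℝ)/(2*n) := by
      nlinarith [div_nonneg hdR.le (by positivity : (0:ℝ) ≤ 2*n)]
    have h3 : (d:ℝ)/n + (d:ℝ)/(2*n) = 3*d/(2*n) := by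
      field_simp; ring
    linarith
  -- Cauchy-Schwarz
  have hCS : ∀ j, a j ^2 ≤ W * q j := fun j => QCS U hU z hz w _
  -- the set as a finset
  set T : Finset (Fin n) :=
    Finset.univ.filter (fun j => (1/(4*(d:ℝ))) * W * q j ≤ a j ^2) with hT
  have hTset : ({j : Fin n | (1 / (4 * (d : ℝ))) * Qip U z w w *
            Qip U z (fun i => U i j) (fun i => U i j)
          ≤ (Qip U z w (fun i => U i j)) ^ 2} : Set (Fin n)) = ↑T := by
    ext j; simp [hT, ← hWdef, ← ha, ← hq]; exact Iff.rfl
  rw [hTset, Set.ncard_coe_finset]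
  -- splitting the Parseval sum
  have hsplit : ∑ j ∈ T, z j * a j ^2 + ∑ j ∈ Tᶜ, z j * a j ^2 = W := by
    rw [Finset.sum_add_sum_compl]
    exact sum_z_sq U hU z hz w
  -- complement bound
  have hcomp : ∑ j ∈ Tᶜ, z j * a j ^2 ≤ W/4 := by
    have step1 : ∑ j ∈ Tᶜ, z j * a j ^2 ≤ ∑ j ∈ Tᶜ, (1/(4*(d:ℝ))) * W * lev U z j := by
      refine Finset.sum_le_sum fun j hj => ?_
      have hjT : ¬ ((1/(4*(d:ℝ))) * W * q j ≤ a j ^2) := by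
        simp only [hT, Finset.mem_compl, Finset.mem_filter, Finset.mem_univ, true_and] at hj
        exact hj
      push_neg at hjT
      rw [hlev]
      calc z j * a j ^2 ≤ z j * ((1/(4*(d:ℝ))) * W * q j) := by
            exact mul_le_mul_of_nonneg_left hjT.le (hz j).le
        _ = (1/(4*(d:ℝ))) * W * (z j * q j) := by ring
    have step2 : ∑ j ∈ Tᶜ, (1/(4*(d:ℝ))) * W * lev U z j ≤
        ∑ j, (1/(4*(d:ℝ))) * W * lev U z j := by
      refine Finset.sum_le_sum_of_subset_of_nonneg (Finset.subset_univ _) fun j _ _ => ?_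
      have := hlev_nonneg j
      positivity
    have step3 : ∑ j, (1/(4*(d:ℝ))) * W * lev U z j = W/4 := by
      rw [← Finset.mul_sum, htr]
      field_simp
    linarith
  -- upper bound on T sum
  have hup : ∑ j ∈ T, z j * a j ^2 ≤ T.card * (W * (3*d/(2*n))) := by
    have : ∀ j ∈ T, z j * a j ^2 ≤ W * (3*d/(2*n)) := by
      intro j _
      calc z j * a j ^2 ≤ z j * (W * q j) := mul_le_mul_of_nonneg_left (hCS j) (hz j).le
        _ = W * (z j * q j) := by ring
        _ = W * lev U z j := by rw [hlev]
        _ ≤ W * (3*d/(2*n)) := mul_le_mul_of_nonneg_left (hcoord j) hW.le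
    calc ∑ j ∈ T, z j * a j ^2 ≤ ∑ _j ∈ T, W * (3*d/(2*n)) := Finset.sum_le_sum this
      _ = T.card * (W * (3*d/(2*n))) := by rw [Finset.sum_const, nsmul_eq_mul]
  -- combine
  have hmain : (3:ℝ)/4 * W ≤ T.card * (W * (3*d/(2*n))) := by linarith
  have hcard0 : (0:ℝ) ≤ (T.card : ℝ) := Nat.cast_nonneg _
  rw [div_le_iff₀ (by positivity)]
  have hmain' : (3:ℝ)/4 * W * (2*n) ≤ (T.card * (3*d)) * W := by
    have := mul_le_mul_of_nonneg_right hmain (by positivity : (0:ℝ) ≤ 2*n)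
    calc (3:ℝ)/4 * W * (2*n) ≤ T.card * (W * (3*d/(2*n))) * (2*n) := this
      _ = (T.card * (3*d)) * W := by field_simp
  have hfin : (3:ℝ)/4 * (2*n) ≤ T.card * (3*d) := by
    have h := le_of_mul_le_mul_right (by linarith [hmain'] : (3:ℝ)/4 * (2*n) * W ≤ (T.card * (3*d)) * W) hW
    linarith [h]
  nlinarith [mul_nonneg hcard0 hdR.le]
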